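/- arXiv:2001.05906 — 2 statements merged into one kernel-verified Lean document; each statement's English description precedes it below -/
import Mathlib

section
/- Let Q ≪ P be probability measures on (Ω, F), let G ⊆ F be a sub-σ-field, and let C be a P-bounded subset of G-measurable nonnegative random variables. Then every g in the Q-probability closure of C admits a G-measurable Q-version g′, i.e. a G-measurable random variable g′ with Q[g = g′] = 1, and g′ can be chosen in the P-closure of the P-solid hull of C. -/
open MeasureTheory Filter Set
open scoped ENNReal Topology

/-- A set of random variables is bounded in probability with respect to a measure. -/
def BddInProb {Ω : Type*} [MeasurableSpace Ω] (P : Measure Ω) (C : Set (Ω → ℝ)) : Prop :=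
  ∀ ε : ℝ, 0 < ε → ∃ M : ℝ, 0 < M ∧ ∀ f ∈ C, P {ω | M ≤ |f ω|} ≤ ENNReal.ofReal ε

/-- The closure of `C` with respect to convergence in probability. -/
def ClInProb {Ω : Type*} [MeasurableSpace Ω] (P : Measure Ω) (C : Set (Ω → ℝ)) :
    Set (Ω → ℝ) :=
  {g | ∃ f : ℕ → Ω → ℝ, (∀ n, f n ∈ C) ∧ TendstoInMeasure P f atTop g}

/-- The `P`-solid hull of a set of nonnegative random variables. -/
def SolidHull {Ω : Type*} [MeasurableSpace Ω] (P : Measure Ω) (C : Set (Ω → ℝ)) :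
    Set (Ω → ℝ) :=
  {g | (∀ ω, 0 ≤ g ω) ∧ ∃ f ∈ C, ∀ᵐ ω ∂P, g ω ≤ f ω}

private lemma aux_setIntegral_eq_zero {Ω : Type*} {m : MeasurableSpace Ω} (P : Measure Ω)
    {s : Set Ω} (hs : MeasurableSet s) {f : Ω → ℝ}
    (hle : ∀ x ∈ s, f x ≤ 0) (hge : 0 ≤ᵐ[P] f) : ∫ x in s, f x ∂P = 0 := by
  have h1 : ∫ x in s, f x ∂P ≤ 0 := setIntegral_nonpos hs hle
  have h2 : 0 ≤ ∫ x in s, f x ∂P := setIntegral_nonneg_ae hs (hge.mono fun ω h _ => h)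
  linarith

private lemma aux_measure_le {Ω : Type*} {m : MeasurableSpace Ω} (P : Measure Ω)
    [IsFiniteMeasure P] {f : Ω → ℝ} (hf : Integrable f P) (hnn : 0 ≤ᵐ[P] f)
    {s t : Set Ω} (hs : MeasurableSet s) (hst : s ⊆ t) {c : ℝ} (hcpos : 0 < c)
    (hc : ∀ x ∈ s, c ≤ f x) : (P s).toReal ≤ (∫ x in t, f x ∂P) / c := by
  have h1 : c * (P s).toReal ≤ ∫ x in s, f x ∂P :=
    setIntegral_ge_of_const_le_real hs (measure_ne_top _ _) hc hf.integrableOn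
  have h2 : ∫ x in s, f x ∂P ≤ ∫ x in t, f x ∂P :=
    setIntegral_mono_set hf.integrableOn (ae_restrict_of_ae hnn)
      (HasSubset.Subset.eventuallyLE hst)
  rw [le_div_iff₀ hcpos]
  calc (P s).toReal * c = c * (P s).toReal := mul_comm _ _
  _ ≤ ∫ x in t, f x ∂P := h1.trans h2

theorem exists_measurable_version_in_closure {Ω : Type*} {F : MeasurableSpace Ω}
    (P Q : Measure Ω) [IsProbabilityMeasure P] [IsProbabilityMeasure Q]
    (hQP : Q ≪ P)
    (G : MeasurableSpace Ω) (hG : G ≤ F)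
    (C : Set (Ω → ℝ))
    (hC_meas : ∀ f ∈ C, Measurable[G] f)
    (hC_nonneg : ∀ f ∈ C, ∀ ω, 0 ≤ f ω)
    (hC : @BddInProb Ω F P C)
    (g : Ω → ℝ) (hg : g ∈ @ClInProb Ω F Q C) :
    ∃ g' : Ω → ℝ, Measurable[G] g' ∧ (∀ᵐ ω ∂Q, g ω = g' ω) ∧
      g' ∈ @ClInProb Ω F P (@SolidHull Ω F P C) := by
  classical
  obtain ⟨f, hfC, hfQ⟩ := hg
  obtain ⟨ns, hns, hae⟩ := hfQ.exists_seq_tendsto_ae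
  haveI : IsFiniteMeasure (P.trim hG) := isFiniteMeasure_trim hG
  -- conditional expectation of the density
  set Z : Ω → ℝ := fun ω => (Q.rnDeriv P ω).toReal with hZdef
  have hZint : Integrable Z P := Measure.integrable_toReal_rnDeriv
  set ZG : Ω → ℝ := P[Z|G] with hZGdef
  have hZG_smeas : StronglyMeasurable[G] ZG := stronglyMeasurable_condExp
  have hZG_meas : Measurable[G] ZG := hZG_smeas.measurable
  have hZG_nonneg : 0 ≤ᵐ[P] ZG :=
    condExp_nonneg (ae_of_all _ fun ω => ENNReal.toReal_nonneg)
  have hZG_int : Integrable ZG P := integrable_condExp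
  set B : Set Ω := {ω | 0 < ZG ω} with hBdef
  have hB_meas : MeasurableSet[G] B := hZG_meas measurableSet_Ioi
  -- the key identity : for G-measurable sets, ∫_D ZG dP = (Q D).toReal
  have key : ∀ D : Set Ω, MeasurableSet[G] D → ∫ ω in D, ZG ω ∂P = (Q D).toReal := by
    intro D hD
    rw [hZGdef, setIntegral_condExp hG hZint hD]
    exact Measure.setIntegral_toReal_rnDeriv hQP D
  have hQB : Q Bᶜ = 0 := by
    have h0 : ∫ ω in Bᶜ, ZG ω ∂P = 0 :=
      aux_setIntegral_eq_zero P (hG _ hB_meas.compl)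
        (fun ω hω => not_lt.mp hω) hZG_nonneg
    have := (key Bᶜ hB_meas.compl).symm.trans h0
    rw [ENNReal.toReal_eq_zero_iff] at this
    exact this.resolve_right (measure_ne_top Q _)
  have hBQ : ∀ᵐ ω ∂Q, ω ∈ B := by
    rw [ae_iff, ← Set.compl_def]
    exact hQB
  -- the candidate version
  set φ : Ω → ℝ :=
    fun ω => (Filter.limsup (fun k => ENNReal.ofReal (f (ns k) ω)) atTop).toReal with hφdef
  have hφ_meas : Measurable[G] φ := by
    have : Measurable[G] fun ω => Filter.limsup (fun k => ENNReal.ofReal (f (ns k) ω)) atTop :=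
      Measurable.limsup fun k => ENNReal.measurable_ofReal.comp (hC_meas _ (hfC (ns k)))
    exact this.ennreal_toReal
  have hφ_nonneg : ∀ ω, 0 ≤ φ ω := fun ω => ENNReal.toReal_nonneg
  set g' : Ω → ℝ := B.indicator φ with hg'def
  have hg'_meas : Measurable[G] g' := hφ_meas.indicator hB_meas
  have hg'_nonneg : ∀ ω, 0 ≤ g' ω := fun ω =>
    indicator_nonneg (fun ω _ => hφ_nonneg ω) ω
  have hQae : ∀ᵐ ω ∂Q, g ω = g' ω := by
    filter_upwards [hae, hBQ] with ω hω hωB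
    have hgnn : 0 ≤ g ω := ge_of_tendsto' hω fun k => hC_nonneg _ (hfC (ns k)) ω
    have hofR : Tendsto (fun k => ENNReal.ofReal (f (ns k) ω)) atTop
        (𝓝 (ENNReal.ofReal (g ω))) := (ENNReal.continuous_ofReal.tendsto _).comp hω
    have hls : Filter.limsup (fun k => ENNReal.ofReal (f (ns k) ω)) atTop
        = ENNReal.ofReal (g ω) := hofR.limsup_eq
    simp [hg'def, indicator_of_mem hωB, hφdef, hls, ENNReal.toReal_ofReal hgnn]
  -- the approximating sequence in the solid hull
  set h : ℕ → Ω → ℝ := fun k => B.indicator (fun ω => min (f (ns k) ω) (φ ω)) with hhdef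
  have hh_meas : ∀ k, Measurable[G] (h k) := fun k =>
    ((hC_meas _ (hfC (ns k))).min hφ_meas).indicator hB_meas
  have hh_nonneg : ∀ k ω, 0 ≤ h k ω := fun k ω =>
    indicator_nonneg (fun ω _ => le_min (hC_nonneg _ (hfC (ns k)) ω) (hφ_nonneg ω)) ω
  have hh_le : ∀ k ω, h k ω ≤ f (ns k) ω := by
    intro k ω
    by_cases hω : ω ∈ B
    · simpa [hhdef, indicator_of_mem hω] using min_le_left _ _
    · simpa [hhdef, indicator_of_notMem hω] using hC_nonneg _ (hfC (ns k)) ω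
  have hh_solid : ∀ k, h k ∈ @SolidHull Ω F P C := fun k =>
    ⟨hh_nonneg k, f (ns k), hfC (ns k), ae_of_all _ (hh_le k)⟩
  -- convergence of h to g' in Q-measure
  have hQconv : ∀ᵐ ω ∂Q, Tendsto (fun k => h k ω) atTop (𝓝 (g' ω)) := by
    filter_upwards [hae, hBQ, hQae] with ω hω hωB hgg'
    have hg'ω : g' ω = φ ω := indicator_of_mem hωB φ
    have hmin : Tendsto (fun k => min (f (ns k) ω) (φ ω)) atTop (𝓝 (min (g ω) (φ ω))) :=
      hω.min tendsto_const_nhds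
    have : min (g ω) (φ ω) = g' ω := by rw [hgg', hg'ω, min_self]
    simpa [hhdef, indicator_of_mem hωB, this] using hmin
  have hQtm : TendstoInMeasure Q h atTop g' :=
    tendstoInMeasure_of_tendsto_ae
      (fun k => ((hh_meas k).mono hG le_rfl).aestronglyMeasurable) hQconv
  refine ⟨g', hg'_meas, hQae, h, hh_solid, ?_⟩
  -- main estimate: convergence of h to g' in P-measure
  intro ε hε
  set D : ℕ → Set Ω := fun k => {ω | ε ≤ edist (h k ω) (g' ω)} with hDdef
  have hD_meas : ∀ k, MeasurableSet[G] (D k) := by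
    intro k
    exact measurableSet_le measurable_const ((hh_meas k).edist hg'_meas)
  have hD_sub : ∀ k, D k ⊆ B := by
    intro k ω hω
    by_contra hωB
    have h1 : h k ω = 0 := indicator_of_notMem hωB _
    have h2 : g' ω = 0 := indicator_of_notMem hωB _
    have : ε ≤ 0 := by simpa [hDdef, h1, h2] using hω
    exact (not_le.mpr hε) this
  have hQD : Tendsto (fun k => Q (D k)) atTop (𝓝 0) := hQtm ε hε
  rw [ENNReal.tendsto_atTop_zero]
  intro η hη
  rcases eq_or_ne η ⊤ with rfl | hηtop
  · exact ⟨0, fun k _ => le_top⟩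
  have hη2 : (0 : ℝ≥0∞) < η / 2 := ENNReal.half_pos hη.ne'
  -- choose δ = 1/(m+1) with P (B ∩ {ZG < δ}) < η/2
  set S : ℕ → Set Ω := fun m => B ∩ {ω | ZG ω < 1 / (m + 1 : ℝ)} with hSdef
  have hS_meas : ∀ m, MeasurableSet[F] (S m) :=
    fun m => (hG _ hB_meas).inter (hG _ (hZG_meas measurableSet_Iio))
  have hS_anti : Antitone S := by
    intro m m' hmm' ω hω
    simp only [hSdef, mem_inter_iff, mem_setOf_eq] at hω ⊢
    refine ⟨hω.1, lt_of_lt_of_le hω.2 ?_⟩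
    apply one_div_le_one_div_of_le
    · positivity
    · have : (m : ℝ) ≤ m' := Nat.cast_le.mpr hmm'
      linarith
  have hS_iInter : ⋂ m, S m = ∅ := by
    ext ω
    simp only [hSdef, mem_iInter, mem_inter_iff, mem_setOf_eq, hBdef,
      mem_empty_iff_false, iff_false, not_forall]
    by_cases h0 : 0 < ZG ω
    · obtain ⟨m, hm⟩ := exists_nat_one_div_lt h0
      exact ⟨m, fun hc => absurd hc.2 (not_lt.mpr hm.le)⟩
    · exact ⟨0, fun hc => h0 hc.1⟩
  have hS_tendsto : Tendsto (fun m => P (S m)) atTop (𝓝 0) := by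
    have hS_null : ∀ m, @NullMeasurableSet Ω F (S m) P :=
      fun m => (hS_meas m).nullMeasurableSet
    have := tendsto_measure_iInter_atTop hS_null hS_anti ⟨0, measure_ne_top _ _⟩
    rw [hS_iInter] at this
    simpa [Function.comp_def] using this
  obtain ⟨m, hm⟩ := (hS_tendsto.eventually_lt_const hη2).exists
  set δ : ℝ := 1 / (m + 1 : ℝ) with hδdef
  have hδpos : 0 < δ := by positivity
  -- per-k bound
  have hbound : ∀ k, P (D k) ≤ ENNReal.ofReal ((Q (D k)).toReal / δ) + P (S m) := by
    intro k
    set T : Set Ω := D k ∩ {ω | δ ≤ ZG ω} with hTdef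
    have hT_meas : MeasurableSet[G] T := (hD_meas k).inter (hZG_meas measurableSet_Ici)
    have hsplit : P (D k) ≤ P T + P (D k ∩ {ω | ZG ω < δ}) := by
      refine le_trans (measure_mono ?_) (measure_union_le _ _)
      intro ω hω
      rcases le_or_gt δ (ZG ω) with hZω | hZω
      · exact Or.inl ⟨hω, hZω⟩
      · exact Or.inr ⟨hω, hZω⟩
    have h2 : P (D k ∩ {ω | ZG ω < δ}) ≤ P (S m) := by
      apply measure_mono
      exact fun ω hω => ⟨hD_sub k hω.1, hω.2⟩
    have h1 : P T ≤ ENNReal.ofReal ((Q (D k)).toReal / δ) := by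
      have hQDk : ∫ ω in D k, ZG ω ∂P = (Q (D k)).toReal := key (D k) (hD_meas k)
      have hPTr : (P T).toReal ≤ (Q (D k)).toReal / δ := by
        rw [← hQDk]
        exact aux_measure_le P hZG_int hZG_nonneg (hG _ hT_meas) inter_subset_left hδpos
          (fun ω hω => hω.2)
      calc P T = ENNReal.ofReal (P T).toReal := (ENNReal.ofReal_toReal (measure_ne_top _ _)).symm
      _ ≤ ENNReal.ofReal ((Q (D k)).toReal / δ) := ENNReal.ofReal_le_ofReal hPTr
    calc P (D k) ≤ P T + P (D k ∩ {ω | ZG ω < δ}) := hsplit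
    _ ≤ ENNReal.ofReal ((Q (D k)).toReal / δ) + P (S m) := add_le_add h1 h2
  -- choose N with the first term ≤ η/2 eventually
  have hQDr : Tendsto (fun k => ENNReal.ofReal ((Q (D k)).toReal / δ)) atTop (𝓝 0) := by
    have h1 : Tendsto (fun k => (Q (D k)).toReal) atTop (𝓝 0) := by
      have := (ENNReal.tendsto_toReal (a := 0) (by simp)).comp hQD
      simpa [Function.comp_def] using this
    have h2 : Tendsto (fun k => (Q (D k)).toReal / δ) atTop (𝓝 0) := by
      simpa using h1.div_const δ
    have := ENNReal.tendsto_ofReal h2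
    simpa using this
  obtain ⟨N, hN⟩ := eventually_atTop.mp (hQDr.eventually_le_const hη2)
  refine ⟨N, fun k hk => ?_⟩
  calc P (D k) ≤ ENNReal.ofReal ((Q (D k)).toReal / δ) + P (S m) := hbound k
  _ ≤ η / 2 + η / 2 := add_le_add (hN k hk) hm.le
  _ = η := ENNReal.add_halves η
end

section
/- Let (Ω, F, P) be a probability space, let (A_i)_{i∈I} be a countable measurable partition of Ω with P[A_i] > 0 for each i, and write Q_i := P[·|A_i]. Suppose that for each i, (Y^i_t)_{t∈I'} is a nonnegative process such that for all s ≤ t in a finite index set I', all X in a family X of nonnegative processes, and all A ∈ F_s, E_{Q_i}[(X_t Y^i_t)/(X_s Y^i_s) · 1_A] ≤ Q_i[A]. Define Z_t := Σ_i Y^i_t 1_{A_i}. Then for all s ≤ t, X ∈ X, and A ∈ F_s: E_P[(X_t Z_t)/(X_s Z_s) · 1_A] ≤ P[A]. Moreover, if each Y^i is strictly positive Q_i-a.s., then Z is strictly positive P-a.s. -/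
open MeasureTheory ProbabilityTheory Filter Set
open scoped ENNReal Topology

theorem pasting_local_deflators
    {Ω : Type*} [m0 : MeasurableSpace Ω]
    (P : Measure Ω) [IsProbabilityMeasure P]
    {ι : Type*} [Countable ι]
    (A : ι → Set Ω)
    (hA_meas : ∀ i, MeasurableSet (A i))
    (hA_disj : Pairwise (Function.onFun Disjoint A))
    (hA_cover : (⋃ i, A i) = univ)
    (hA_pos : ∀ i, 0 < P (A i))
    (T : ℕ) (ℱ : ℕ → MeasurableSpace Ω) (hℱ : ∀ t, ℱ t ≤ m0)
    (Y : ι → ℕ → Ω → ℝ)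
    (hY_nonneg : ∀ i t ω, 0 ≤ Y i t ω)
    (𝒳 : Set (ℕ → Ω → ℝ))
    (h𝒳 : ∀ X ∈ 𝒳, (∀ t ω, 0 ≤ X t ω) ∧
      ∀ s t, s ≤ t → X s ⁻¹' {0} ⊆ X t ⁻¹' {0})
    -- local generalized supermartingale deflator property under each `Qᵢ := P[·|Aᵢ]`;
    -- quotients use Lean's convention `0/0 = 0`
    (hY : ∀ i, ∀ s t, s ≤ t → t ≤ T → ∀ X ∈ 𝒳, ∀ B : Set Ω, MeasurableSet[ℱ s] B →
      ∫⁻ ω in B, ENNReal.ofReal (X t ω * Y i t ω / (X s ω * Y i s ω))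
          ∂(ProbabilityTheory.cond P (A i))
        ≤ ProbabilityTheory.cond P (A i) B) :
    (∀ s t, s ≤ t → t ≤ T → ∀ X ∈ 𝒳, ∀ B : Set Ω, MeasurableSet[ℱ s] B →
      ∫⁻ ω in B,
          ENNReal.ofReal (X t ω * (∑' i, Set.indicator (A i) (Y i t) ω)
            / (X s ω * (∑' i, Set.indicator (A i) (Y i s) ω))) ∂P
        ≤ P B) ∧
    ((∀ i, ∀ t ≤ T, ∀ᵐ ω ∂(ProbabilityTheory.cond P (A i)), 0 < Y i t ω) →
      ∀ t ≤ T, ∀ᵐ ω ∂P, 0 < ∑' i, Set.indicator (A i) (Y i t) ω) := by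
  have hPA_ne_top : ∀ i, P (A i) ≠ ∞ := fun i => measure_ne_top P _
  have hPA_ne : ∀ i, P (A i) ≠ 0 := fun i => (hA_pos i).ne'
  have hZeq : ∀ (i : ι) (u : ℕ) (ω : Ω), ω ∈ A i →
      (∑' j, Set.indicator (A j) (Y j u) ω) = Y i u ω := by
    intro i u ω hω
    rw [tsum_eq_single i]
    · exact Set.indicator_of_mem hω _
    · intro j hj
      exact Set.indicator_of_notMem
        (fun hωj => Set.disjoint_left.mp (hA_disj hj) hωj hω) _
  constructor
  · intro s t hst htT X hX B hB
    have hBm : MeasurableSet B := hℱ s B hB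
    have hBAm : ∀ i, MeasurableSet (B ∩ A i) := fun i => hBm.inter (hA_meas i)
    have hBAd : Pairwise (Function.onFun Disjoint (fun i => B ∩ A i)) :=
      fun i j hij => ((hA_disj hij).mono inter_subset_right inter_subset_right)
    have hBU : B = ⋃ i, B ∩ A i := by
      rw [← inter_iUnion, hA_cover, inter_univ]
    have key : ∀ i, (∫⁻ ω in B ∩ A i,
        ENNReal.ofReal (X t ω * (∑' j, Set.indicator (A j) (Y j t) ω)
          / (X s ω * (∑' j, Set.indicator (A j) (Y j s) ω))) ∂P) ≤ P (B ∩ A i) := by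
      intro i
      have hcongr : (∫⁻ ω in B ∩ A i,
          ENNReal.ofReal (X t ω * (∑' j, Set.indicator (A j) (Y j t) ω)
            / (X s ω * (∑' j, Set.indicator (A j) (Y j s) ω))) ∂P)
          = ∫⁻ ω in B ∩ A i,
            ENNReal.ofReal (X t ω * Y i t ω / (X s ω * Y i s ω)) ∂P :=
        setLIntegral_congr_fun (hBAm i)
          (fun ω hω => by rw [hZeq i t ω hω.2, hZeq i s ω hω.2])
      have hrestr : (ProbabilityTheory.cond P (A i)).restrict B
          = (P (A i))⁻¹ • P.restrict (B ∩ A i) := by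
        rw [ProbabilityTheory.cond, Measure.restrict_smul,
          Measure.restrict_restrict hBm]
      have hQ := hY i s t hst htT X hX B hB
      rw [show (∫⁻ ω in B, ENNReal.ofReal (X t ω * Y i t ω / (X s ω * Y i s ω))
            ∂(ProbabilityTheory.cond P (A i)))
          = (P (A i))⁻¹ * ∫⁻ ω in B ∩ A i,
              ENNReal.ofReal (X t ω * Y i t ω / (X s ω * Y i s ω)) ∂P from by
        rw [show (∫⁻ ω in B, ENNReal.ofReal (X t ω * Y i t ω / (X s ω * Y i s ω))
              ∂(ProbabilityTheory.cond P (A i)))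
            = ∫⁻ ω, ENNReal.ofReal (X t ω * Y i t ω / (X s ω * Y i s ω))
              ∂((ProbabilityTheory.cond P (A i)).restrict B) from rfl,
          hrestr, lintegral_smul_measure, smul_eq_mul]] at hQ
      rw [cond_apply (hA_meas i)] at hQ
      rw [hcongr]
      have := (ENNReal.mul_le_mul_iff_right
        (ENNReal.inv_ne_zero.mpr (hPA_ne_top i))
        (ENNReal.inv_ne_top.mpr (hPA_ne i))).mp hQ
      rwa [Set.inter_comm (A i) B] at this
    calc ∫⁻ ω in B,
          ENNReal.ofReal (X t ω * (∑' j, Set.indicator (A j) (Y j t) ω)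
            / (X s ω * (∑' j, Set.indicator (A j) (Y j s) ω))) ∂P
        = ∑' i, ∫⁻ ω in B ∩ A i,
          ENNReal.ofReal (X t ω * (∑' j, Set.indicator (A j) (Y j t) ω)
            / (X s ω * (∑' j, Set.indicator (A j) (Y j s) ω))) ∂P := by
          conv_lhs => rw [hBU]
          rw [Measure.restrict_iUnion hBAd hBAm, lintegral_sum_measure]
      _ ≤ ∑' i, P (B ∩ A i) := ENNReal.tsum_le_tsum key
      _ = P (⋃ i, B ∩ A i) := (measure_iUnion hBAd hBAm).symm
      _ = P B := by rw [← hBU]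
  · intro hpos t htT
    rw [ae_iff]
    have hnull : ∀ i, P (A i ∩ {ω | ¬ 0 < Y i t ω}) = 0 := by
      intro i
      have h := hpos i t htT
      rw [ae_iff, cond_apply (hA_meas i)] at h
      exact (mul_eq_zero.mp h).resolve_left
        (ENNReal.inv_ne_zero.mpr (hPA_ne_top i))
    refine measure_mono_null ?_ (measure_iUnion_null hnull)
    intro ω hω
    have hωU : ω ∈ ⋃ i, A i := hA_cover ▸ mem_univ ω
    obtain ⟨i, hi⟩ := mem_iUnion.mp hωU
    refine mem_iUnion.mpr ⟨i, hi, fun h => hω ?_⟩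
    show 0 < ∑' j, Set.indicator (A j) (Y j t) ω
    rw [hZeq i t ω hi]
    exact h
end
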